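/- Let I be a finite set, 2^I = a⁰ ∪ a¹ a partition, and suppose that for every set X ⊆ 2^I with |X| = k and each i ∈ {0,1}, |⋂_{x∈X}(a^i + x)|/2^{|I|} ≤ 2^{-k} + δ. Then for any set W ⊆ 2^I, if the set Z = {v ∈ 2^I : ∃ i ∈ {0,1}, a^i + v ⊆ W} has more than 2(k−1) elements, then |W|/2^{|I|} ≥ 1 − 2^{-k} − δ. -/

import Mathlib

open scoped Classical

/-- Let `2^I = a false ∪ a true` be a partition such that for every `X ⊆ 2^I` with
`|X| = k` and each `i`, `|⋂_{x∈X}(aⁱ + x)|/2^{|I|} ≤ 2^{-k} + δ`.  Then for any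
`W ⊆ 2^I`, if `Z = {v : ∃ i, aⁱ + v ⊆ W}` has more than `2(k−1)` elements, then
`|W|/2^{|I|} ≥ 1 − 2^{-k} − δ`. -/
theorem stmt11 {I : Type*} [Fintype I] [DecidableEq I] (k : ℕ) (δ : ℝ) (hδ : 0 < δ)
    (a : Bool → Finset (I → ZMod 2))
    (hpart : a false ∪ a true = Finset.univ) (hdisj : Disjoint (a false) (a true))
    (hyp : ∀ (X : Finset (I → ZMod 2)), X.card = k → ∀ i : Bool,
      ((Finset.univ.filter
          (fun t => ∀ x ∈ X, t ∈ (a i).image (· + x))).card : ℝ) / 2 ^ Fintype.card I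
        ≤ (1 / 2 : ℝ) ^ k + δ)
    (W : Finset (I → ZMod 2))
    (hZ : 2 * (k - 1) <
      (Finset.univ.filter
        (fun v : I → ZMod 2 => ∃ i : Bool, (a i).image (· + v) ⊆ W)).card) :
    1 - (1 / 2 : ℝ) ^ k - δ ≤ (W.card : ℝ) / 2 ^ Fintype.card I := by
  classical
  set n := Fintype.card I with hn
  -- find i and X of size k whose translates all lie in W
  obtain ⟨i, X, hXcard, hXW⟩ :
      ∃ (i : Bool) (X : Finset (I → ZMod 2)), X.card = k ∧
        ∀ x ∈ X, (a i).image (· + x) ⊆ W := by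
    rcases Nat.eq_zero_or_pos k with hk | hk
    · exact ⟨false, ∅, by simp [hk], by simp⟩
    · set Zf := Finset.univ.filter (fun v : I → ZMod 2 => (a false).image (· + v) ⊆ W) with hZf
      set Zt := Finset.univ.filter (fun v : I → ZMod 2 => (a true).image (· + v) ⊆ W) with hZt
      have hsub : (Finset.univ.filter
          (fun v : I → ZMod 2 => ∃ i : Bool, (a i).image (· + v) ⊆ W)) ⊆ Zf ∪ Zt := by
        intro v hv
        simp only [Finset.mem_filter, Finset.mem_union, hZf, hZt, Finset.mem_univ,
          true_and] at *
        rcases hv with ⟨i, hi⟩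
        cases i
        · exact Or.inl hi
        · exact Or.inr hi
      have hcard2 : 2 * (k - 1) < Zf.card + Zt.card :=
        lt_of_lt_of_le hZ ((Finset.card_le_card hsub).trans (Finset.card_union_le _ _))
      have hor : k ≤ Zf.card ∨ k ≤ Zt.card := by omega
      rcases hor with h | h
      · obtain ⟨X, hXs, hXc⟩ := Finset.exists_subset_card_eq (s := Zf) h
        exact ⟨false, X, hXc, fun x hx => (Finset.mem_filter.1 (hXs hx)).2⟩
      · obtain ⟨X, hXs, hXc⟩ := Finset.exists_subset_card_eq (s := Zt) h
        exact ⟨true, X, hXc, fun x hx => (Finset.mem_filter.1 (hXs hx)).2⟩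
  -- the two translates cover everything
  have hcover : ∀ (x t : I → ZMod 2),
      t ∈ (a false).image (· + x) ∪ (a true).image (· + x) := by
    intro x t
    have h1 : t - x ∈ a false ∪ a true := by rw [hpart]; exact Finset.mem_univ _
    rcases Finset.mem_union.1 h1 with h | h
    · exact Finset.mem_union_left _ (Finset.mem_image.2 ⟨t - x, h, sub_add_cancel t x⟩)
    · exact Finset.mem_union_right _ (Finset.mem_image.2 ⟨t - x, h, sub_add_cancel t x⟩)
  set T := Finset.univ.filter (fun t => ∀ x ∈ X, t ∈ (a (!i)).image (· + x)) with hTdef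
  have hT : Wᶜ ⊆ T := by
    intro t ht
    rw [Finset.mem_compl] at ht
    refine Finset.mem_filter.2 ⟨Finset.mem_univ _, fun x hx => ?_⟩
    have hnot : t ∉ (a i).image (· + x) := fun hmem => ht (hXW x hx hmem)
    cases i with
    | false => exact (Finset.mem_union.1 (hcover x t)).resolve_left hnot
    | true => exact (Finset.mem_union.1 (hcover x t)).resolve_right hnot
  have hfin : Fintype.card (I → ZMod 2) = 2 ^ n := by
    simp [hn]
  have hWle : W.card ≤ 2 ^ n := by
    rw [← hfin]; exact Finset.card_le_univ W
  have hTcard : 2 ^ n - W.card ≤ T.card := by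
    have h := Finset.card_le_card hT
    rwa [Finset.card_compl, hfin] at h
  have hhyp := hyp X hXcard (!i)
  have hpow : (0 : ℝ) < 2 ^ n := by positivity
  rw [div_le_iff₀ hpow] at hhyp
  rw [le_div_iff₀ hpow]
  have h1 : (2 : ℝ) ^ n - (W.card : ℝ) ≤ (T.card : ℝ) := by
    have := (Nat.cast_le (α := ℝ)).2 hTcard
    rw [Nat.cast_sub hWle] at this
    push_cast at this ⊢
    linarith
  nlinarith [h1, hhyp]
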